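/- Let G be a simple signed graph and C a non-trivial connected component of the positive subgraph G⁺. Let G/C be the simple signed graph obtained by contracting C to a single vertex c, adding a new vertex c' and a negative edge cc', and making all remaining edges incident to c negative (other edges keep their signs). Then fix(G) ≤ fix(G/C), with equality if G[C] has no negative edge. -/

import Mathlib

/-- `S` is a fixed set of the conjunctive network with positive edges `pos`,
negative edges `neg`. -/
def IsFixedSet {V : Type*} (pos neg : V → V → Prop) (S : Set V) : Prop :=
  ∀ v, v ∈ S ↔ (∀ u, pos u v → u ∈ S) ∧ (∀ u, neg u v → u ∉ S)

/-- Number of fixed points of the conjunctive network. -/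
noncomputable def fixc {V : Type*} (pos neg : V → V → Prop) : ℕ :=
  Set.ncard {S : Set V | IsFixedSet pos neg S}

/-- Positive edges of the contraction `G/C`: vertices are `{v // v ∉ C} ⊕ Fin 2`,
where `Sum.inr 0` is the contracted vertex `c` and `Sum.inr 1` is the pendant `c'`;
all edges incident to `c` or `c'` are negative. -/
def cpos {V : Type*} (pos : V → V → Prop) (C : Set V) :
    ({v : V // v ∉ C} ⊕ Fin 2) → ({v : V // v ∉ C} ⊕ Fin 2) → Prop
  | Sum.inl u, Sum.inl v => pos u.1 v.1
  | _, _ => False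

/-- Negative edges of the contraction `G/C`: edges of `G − C` keep their negative
edges, every merged edge from `C` to the rest becomes a negative edge at `c`,
and `cc'` is a negative edge. -/
def cneg {V : Type*} (pos neg : V → V → Prop) (C : Set V) :
    ({v : V // v ∉ C} ⊕ Fin 2) → ({v : V // v ∉ C} ⊕ Fin 2) → Prop
  | Sum.inl u, Sum.inl v => neg u.1 v.1
  | Sum.inl u, Sum.inr i => i = 0 ∧ ∃ w ∈ C, pos u.1 w ∨ neg u.1 w
  | Sum.inr i, Sum.inl u => i = 0 ∧ ∃ w ∈ C, pos u.1 w ∨ neg u.1 w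
  | Sum.inr i, Sum.inr j => i ≠ j

/-- Forward map: a set `S ⊆ V` is sent to a subset of the contracted vertex set. -/
def fwdMap {V : Type*} (C : Set V) (w0 : V) (S : Set V) :
    Set ({v : V // v ∉ C} ⊕ Fin 2) :=
  Sum.elim (fun u => u.1 ∈ S) (fun i => if i = 0 then w0 ∈ S else w0 ∉ S)

open Classical in
/-- Backward map: a subset of the contracted vertex set is sent back to `V`. -/
noncomputable def bwdMap {V : Type*} (C : Set V)
    (T : Set ({v : V // v ∉ C} ⊕ Fin 2)) : Set V :=
  fun v => if h : v ∈ C then Sum.inr 0 ∈ T else Sum.inl ⟨v, h⟩ ∈ T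

/-- If `C` is a non-trivial connected component of the positive subgraph of a simple
signed graph `G`, then `fix(G) ≤ fix(G/C)`, with equality when `G[C]` has no
negative edge. -/
theorem stmt14 {V : Type*} [Fintype V] (pos neg : V → V → Prop)
    (hps : Symmetric pos) (hns : Symmetric neg)
    (hpi : ∀ v, ¬ pos v v) (hni : ∀ v, ¬ neg v v)
    (hd : ∀ u v, pos u v → ¬ neg u v)
    (C : Set V)
    (hC : ∃ w ∈ C, ∀ v, v ∈ C ↔ Relation.ReflTransGen pos w v)
    (hnt : ∃ u ∈ C, ∃ v ∈ C, u ≠ v) :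
    fixc pos neg ≤ fixc (cpos pos C) (cneg pos neg C) ∧
    ((∀ u ∈ C, ∀ v ∈ C, ¬ neg u v) →
      fixc pos neg = fixc (cpos pos C) (cneg pos neg C)) := by
  classical
  obtain ⟨w0, hw0C, hC⟩ := hC
  have fin2 : ∀ i : Fin 2, i = 0 ∨ i = 1 := by decide
  have hsymR : Symmetric (Relation.ReflTransGen pos) :=
    by haveI : Std.Symm pos := ⟨fun a b h => hps h⟩; exact fun a b h => Std.Symm.symm a b h
  have hcomp : ∀ {u v}, pos u v → u ∈ C → v ∈ C := by
    intro u v h hu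
    exact (hC v).mpr (((hC u).mp hu).tail h)
  have hnbr : ∀ v ∈ C, ∃ x ∈ C, pos v x := by
    intro v hv
    obtain ⟨a, ha, b, hb, hab⟩ := hnt
    obtain ⟨y, hy, hyv⟩ : ∃ y ∈ C, y ≠ v := by
      rcases eq_or_ne a v with rfl | h
      · exact ⟨b, hb, fun e => hab e.symm⟩
      · exact ⟨a, ha, h⟩
    have hr : Relation.ReflTransGen pos v y :=
      (hsymR ((hC v).mp hv)).trans ((hC y).mp hy)
    rcases hr.cases_head with he | ⟨x, hx, _⟩
    · exact absurd he.symm hyv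
    · exact ⟨x, hcomp hx hv, hx⟩
  -- membership lemmas for fwdMap
  have mf0 : ∀ S : Set V,
      ((Sum.inr 0 : {v : V // v ∉ C} ⊕ Fin 2) ∈ fwdMap C w0 S) ↔ w0 ∈ S := by
    intro S
    show (if (0 : Fin 2) = 0 then w0 ∈ S else w0 ∉ S) ↔ _
    rw [if_pos rfl]
  have mf1 : ∀ S : Set V,
      ((Sum.inr 1 : {v : V // v ∉ C} ⊕ Fin 2) ∈ fwdMap C w0 S) ↔ w0 ∉ S := by
    intro S
    show (if (1 : Fin 2) = 0 then w0 ∈ S else w0 ∉ S) ↔ _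
    rw [if_neg (by decide : ¬ (1 : Fin 2) = 0)]
  have mfl : ∀ (S : Set V) (u : {v : V // v ∉ C}),
      (Sum.inl u ∈ fwdMap C w0 S) ↔ u.1 ∈ S := fun _ _ => Iff.rfl
  -- basic facts about fixed sets of G
  have pcl : ∀ (S : Set V), IsFixedSet pos neg S → ∀ {u v}, pos u v → (u ∈ S ↔ v ∈ S) :=
    fun S hS {u v} h =>
      ⟨fun hu => ((hS u).mp hu).1 v (hps h), fun hv => ((hS v).mp hv).1 u h⟩
  have keyC : ∀ (S : Set V), IsFixedSet pos neg S → ∀ v ∈ C, (v ∈ S ↔ w0 ∈ S) := by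
    intro S hS v hv
    have hreach : ∀ {a b}, Relation.ReflTransGen pos a b → (a ∈ S ↔ b ∈ S) := by
      intro a b h
      induction h with
      | refl => exact Iff.rfl
      | tail h1 h2 ih => exact ih.trans (pcl S hS h2)
    exact (hreach ((hC v).mp hv)).symm
  -- forward map preserves fixedness
  have hfwd : ∀ S, IsFixedSet pos neg S →
      IsFixedSet (cpos pos C) (cneg pos neg C) (fwdMap C w0 S) := by
    intro S hS
    have nfr : ∀ {u v}, neg u v → u ∈ S → v ∉ S :=
      fun {u v} h hu => ((hS u).mp hu).2 v (hns h)
    intro x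
    rcases x with u | i
    · -- x = inl u
      constructor
      · intro hu
        have huS : u.1 ∈ S := hu
        constructor
        · rintro (w | j) hpw
          · exact (pcl S hS hpw).mpr huS
          · exact hpw.elim
        · rintro (w | j) hnw
          · exact nfr (hns hnw) huS
          · obtain ⟨rfl, z, hzC, hor⟩ := hnw
            rcases hor with h | h
            · exact absurd (hcomp (hps h) hzC) u.2
            · have hzS : z ∉ S := nfr h huS
              rw [mf0 S]
              exact fun hw => hzS ((keyC S hS z hzC).mpr hw)
      · rintro ⟨hA, hB⟩
        refine (hS u.1).mpr ⟨?_, ?_⟩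
        · intro x hx
          have hxC : x ∉ C := fun hxC => u.2 (hcomp hx hxC)
          exact hA (Sum.inl ⟨x, hxC⟩) hx
        · intro x hx
          by_cases hxC : x ∈ C
          · have h0 : Sum.inr 0 ∉ fwdMap C w0 S :=
              hB (Sum.inr 0) ⟨rfl, x, hxC, Or.inr (hns hx)⟩
            have hw0 : w0 ∉ S := fun hw => h0 ((mf0 S).mpr hw)
            exact fun hxS => hw0 ((keyC S hS x hxC).mp hxS)
          · exact hB (Sum.inl ⟨x, hxC⟩) hx
    · -- x = inr i
      rcases fin2 i with rfl | rfl
      · -- the contracted vertex c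
        rw [mf0 S]
        constructor
        · intro hw0
          constructor
          · rintro (w | j) hpw
            · exact hpw.elim
            · exact hpw.elim
          · rintro (w | j) hnw
            · obtain ⟨-, z, hzC, hor⟩ := hnw
              rcases hor with h | h
              · exact absurd (hcomp (hps h) hzC) w.2
              · have hzS : z ∈ S := (keyC S hS z hzC).mpr hw0
                exact nfr (hns h) hzS
            · rcases fin2 j with rfl | rfl
              · exact absurd rfl hnw
              · rw [mf1 S]
                exact not_not_intro hw0
        · rintro ⟨-, hB⟩
          have h1 : Sum.inr 1 ∉ fwdMap C w0 S :=
            hB (Sum.inr 1) (show (1 : Fin 2) ≠ 0 by decide)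
          rw [mf1 S] at h1
          exact not_not.mp h1
      · -- the pendant vertex c'
        rw [mf1 S]
        constructor
        · intro hw0
          constructor
          · rintro (w | j) hpw
            · exact hpw.elim
            · exact hpw.elim
          · rintro (w | j) hnw
            · exact absurd hnw.1 (by decide : ¬ (1 : Fin 2) = 0)
            · rcases fin2 j with rfl | rfl
              · rw [mf0 S]
                exact hw0
              · exact absurd rfl hnw
        · rintro ⟨-, hB⟩
          have h0 : Sum.inr 0 ∉ fwdMap C w0 S :=
            hB (Sum.inr 0) (show (0 : Fin 2) ≠ 1 by decide)
          rw [mf0 S] at h0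
          exact h0
  -- forward map is injective on fixed sets
  have injfwd : Set.InjOn (fwdMap C w0) {S : Set V | IsFixedSet pos neg S} := by
    intro S hS S' hS' heq
    ext v
    by_cases hv : v ∈ C
    · have h0 : (Sum.inr 0 ∈ fwdMap C w0 S) ↔ (Sum.inr 0 ∈ fwdMap C w0 S') := by
        rw [heq]
      rw [mf0 S, mf0 S'] at h0
      exact (keyC S hS v hv).trans (h0.trans (keyC S' hS' v hv).symm)
    · have h : (Sum.inl ⟨v, hv⟩ ∈ fwdMap C w0 S) ↔ (Sum.inl ⟨v, hv⟩ ∈ fwdMap C w0 S') := by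
        rw [heq]
      exact h
  -- membership lemmas for bwdMap
  have mb0 : ∀ (T : Set ({v : V // v ∉ C} ⊕ Fin 2)) (v : V), v ∈ C →
      (v ∈ bwdMap C T ↔ Sum.inr 0 ∈ T) := by
    intro T v hv
    show (if h : v ∈ C then Sum.inr 0 ∈ T else Sum.inl ⟨v, h⟩ ∈ T) ↔ _
    rw [dif_pos hv]
  have mb1 : ∀ (T : Set ({v : V // v ∉ C} ⊕ Fin 2)) (v : V) (hv : v ∉ C),
      (v ∈ bwdMap C T ↔ Sum.inl ⟨v, hv⟩ ∈ T) := by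
    intro T v hv
    show (if h : v ∈ C then Sum.inr 0 ∈ T else Sum.inl ⟨v, h⟩ ∈ T) ↔ _
    rw [dif_neg hv]
  -- in a fixed set of G/C, c' ∈ T ↔ c ∉ T
  have hcc' : ∀ (T : Set ({v : V // v ∉ C} ⊕ Fin 2)),
      IsFixedSet (cpos pos C) (cneg pos neg C) T →
      ((Sum.inr 1 ∈ T) ↔ (Sum.inr 0 ∉ T)) := by
    intro T hT
    constructor
    · intro h1
      exact ((hT (Sum.inr 1)).mp h1).2 (Sum.inr 0) (show (0 : Fin 2) ≠ 1 by decide)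
    · intro h0
      refine (hT (Sum.inr 1)).mpr ⟨?_, ?_⟩
      · rintro (w | j) hpw
        · exact hpw.elim
        · exact hpw.elim
      · rintro (w | j) hnw
        · exact absurd hnw.1 (by decide : ¬ (1 : Fin 2) = 0)
        · rcases fin2 j with rfl | rfl
          · exact h0
          · exact absurd rfl hnw
  -- backward map preserves fixedness when C has no internal negative edge
  have hbwd : (∀ u ∈ C, ∀ v ∈ C, ¬ neg u v) →
      ∀ T, IsFixedSet (cpos pos C) (cneg pos neg C) T →
      IsFixedSet pos neg (bwdMap C T) := by
    intro hno T hT v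
    by_cases hv : v ∈ C
    · rw [mb0 T v hv]
      constructor
      · intro h0
        constructor
        · intro u hu
          have huC : u ∈ C := hcomp (hps hu) hv
          exact (mb0 T u huC).mpr h0
        · intro u hu
          by_cases huC : u ∈ C
          · exact absurd hu (hno u huC v hv)
          · have hnt : Sum.inl ⟨u, huC⟩ ∉ T :=
              ((hT (Sum.inr 0)).mp h0).2 (Sum.inl ⟨u, huC⟩) ⟨rfl, v, hv, Or.inr hu⟩
            rw [mb1 T u huC]
            exact hnt
      · rintro ⟨hA, -⟩
        obtain ⟨x, hxC, hvx⟩ := hnbr v hv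
        have hxS : x ∈ bwdMap C T := hA x (hps hvx)
        exact (mb0 T x hxC).mp hxS
    · rw [mb1 T v hv]
      constructor
      · intro hvT
        constructor
        · intro u hu
          have huC : u ∉ C := fun huC => hv (hcomp hu huC)
          have hm : Sum.inl ⟨u, huC⟩ ∈ T :=
            ((hT (Sum.inl ⟨v, hv⟩)).mp hvT).1 (Sum.inl ⟨u, huC⟩) hu
          exact (mb1 T u huC).mpr hm
        · intro u hu
          by_cases huC : u ∈ C
          · have h0 : Sum.inr 0 ∉ T :=
              ((hT (Sum.inl ⟨v, hv⟩)).mp hvT).2 (Sum.inr 0) ⟨rfl, u, huC, Or.inr (hns hu)⟩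
            rw [mb0 T u huC]
            exact h0
          · have hm : Sum.inl ⟨u, huC⟩ ∉ T :=
              ((hT (Sum.inl ⟨v, hv⟩)).mp hvT).2 (Sum.inl ⟨u, huC⟩) hu
            rw [mb1 T u huC]
            exact hm
      · rintro ⟨hA, hB⟩
        refine (hT (Sum.inl ⟨v, hv⟩)).mpr ⟨?_, ?_⟩
        · rintro (w | j) hpw
          · exact (mb1 T w.1 w.2).mp (hA w.1 hpw)
          · exact hpw.elim
        · rintro (w | j) hnw
          · exact fun hwT => hB w.1 hnw ((mb1 T w.1 w.2).mpr hwT)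
          · obtain ⟨rfl, z, hzC, hor⟩ := hnw
            rcases hor with h | h
            · exact absurd (hcomp (hps h) hzC) hv
            · intro h0
              have hzS : z ∈ bwdMap C T := (mb0 T z hzC).mpr h0
              exact hB z (hns h) hzS
  -- backward map is injective on fixed sets
  have injbwd : Set.InjOn (bwdMap C)
      {T : Set ({v : V // v ∉ C} ⊕ Fin 2) | IsFixedSet (cpos pos C) (cneg pos neg C) T} := by
    intro T hT T' hT' heq
    have h0 : (Sum.inr 0 ∈ T) ↔ (Sum.inr 0 ∈ T') := by
      rw [← mb0 T w0 hw0C, ← mb0 T' w0 hw0C, heq]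
    ext x
    rcases x with u | i
    · have hm : u.1 ∈ bwdMap C T ↔ u.1 ∈ bwdMap C T' := by rw [heq]
      exact (mb1 T u.1 u.2).symm.trans (hm.trans (mb1 T' u.1 u.2))
    · rcases fin2 i with rfl | rfl
      · exact h0
      · rw [hcc' T hT, hcc' T' hT']
        exact not_congr h0
  constructor
  · exact Set.ncard_le_ncard_of_injOn (fwdMap C w0)
      (fun S hS => hfwd S hS) injfwd (Set.toFinite _)
  · intro hno
    refine le_antisymm
      (Set.ncard_le_ncard_of_injOn (fwdMap C w0) (fun S hS => hfwd S hS) injfwd (Set.toFinite _))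
      (Set.ncard_le_ncard_of_injOn (bwdMap C) (fun T hT => hbwd hno T hT) injbwd (Set.toFinite _))
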